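/- Let ε have a density with full support on ℝ^{J+1} and finite means, and let G(a) = E[max_j (a_j + ε_j)]. Then the map a ↦ ∇G(a), restricted to the hyperplane {a ∈ ℝ^{J+1} : a₀ = 0}, is injective into the interior of the unit simplex. -/

import Mathlib

open MeasureTheory
open Finset
open scoped ENNReal

variable {J : ℕ}

/-- sup over coordinates of x + c -/
noncomputable def msup (x c : Fin (J + 1) → ℝ) : ℝ := ⨆ j, (x j + c j)

lemma msup_le {x c : Fin (J + 1) → ℝ} {M : ℝ} (h : ∀ j, x j + c j ≤ M) : msup x c ≤ M :=
  ciSup_le h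

lemma le_msup (x c : Fin (J + 1) → ℝ) (j : Fin (J + 1)) : x j + c j ≤ msup x c :=
  le_ciSup (f := fun j => x j + c j) (Set.Finite.bddAbove (Set.finite_range _)) j

lemma exists_msup_eq (x c : Fin (J + 1) → ℝ) : ∃ j, msup x c = x j + c j := by
  obtain ⟨j, hj⟩ := Finset.exists_max_image (univ : Finset (Fin (J+1))) (fun j => x j + c j)
    ⟨0, mem_univ 0⟩
  exact ⟨j, le_antisymm (msup_le fun k => hj.2 k (mem_univ k)) (le_msup x c j)⟩

lemma msup_lipschitz (c : Fin (J + 1) → ℝ) :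
    LipschitzWith 1 (fun x : Fin (J + 1) → ℝ => msup x c) := by
  rw [lipschitzWith_iff_dist_le_mul]
  intro x y
  rw [Real.dist_eq, NNReal.coe_one, one_mul, abs_le]
  have key : ∀ u v : Fin (J+1) → ℝ, msup u c - msup v c ≤ dist u v := by
    intro u v
    rw [sub_le_iff_le_add]
    refine msup_le fun j => ?_
    have h1 : u j - v j ≤ dist u v := by
      calc u j - v j ≤ |u j - v j| := le_abs_self _
        _ = dist (u j) (v j) := (Real.dist_eq _ _).symm
        _ ≤ dist u v := dist_le_pi_dist u v j
    have := le_msup v c j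
    linarith
  constructor
  · have := key y x; rw [dist_comm] at this; linarith
  · exact key x y

lemma measurable_msup (x : Fin (J + 1) → ℝ) : Measurable (fun c : Fin (J+1) → ℝ => msup x c) := by
  have : (fun c : Fin (J+1) → ℝ => msup x c)
      = fun c => (univ : Finset (Fin (J+1))).sup' ⟨0, mem_univ 0⟩ (fun j => x j + c j) := by
    funext c
    rw [msup, ← Finset.sup'_univ_eq_ciSup]
  rw [this]
  have := Finset.measurable_sup' (α := ℝ) (⟨0, mem_univ 0⟩ : (univ : Finset (Fin (J+1))).Nonempty)
    (f := fun j (c : Fin (J+1) → ℝ) => x j + c j)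
    (fun j _ => (measurable_const.add (measurable_pi_apply j)))
  convert this using 1
  funext c
  exact (Finset.sup'_apply (C := fun _ : Fin (J+1) → ℝ => ℝ) _ (fun j (c : Fin (J+1) → ℝ) => x j + c j) c).symm

lemma integrable_msup {Ωs : Type*} [MeasurableSpace Ωs] {μ : Measure Ωs} [IsFiniteMeasure μ]
    {ε : Ωs → (Fin (J + 1) → ℝ)} (hmeas : Measurable ε)
    (hint : ∀ j, Integrable (fun ω => ε ω j) μ) (x : Fin (J + 1) → ℝ) :
    Integrable (fun ω => msup x (ε ω)) μ := by
  have hb : Integrable (fun ω => ∑ j, |x j + ε ω j|) μ :=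
    integrable_finset_sum _ fun j _ => ((integrable_const (x j)).add (hint j)).abs
  refine hb.mono (((measurable_msup x).comp hmeas).aestronglyMeasurable)
    (Filter.Eventually.of_forall fun ω => ?_)
  have h1 : ∀ j, |x j + ε ω j| ≤ ∑ k, |x k + ε ω k| := fun j =>
    Finset.single_le_sum (f := fun k => |x k + ε ω k|) (fun k _ => abs_nonneg _) (mem_univ j)
  rw [Real.norm_eq_abs, Real.norm_eq_abs,
    abs_of_nonneg (Finset.sum_nonneg fun (j : Fin (J+1)) _ => abs_nonneg (x j + ε ω j)), abs_le]
  constructor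
  · have := le_msup x (ε ω) 0
    have h0 := h1 0
    have := neg_abs_le (x 0 + ε ω 0)
    linarith
  · refine msup_le fun j => (le_abs_self _).trans (h1 j)

/-- the open set of error realizations where alternative j is the strict argmax under utilities a -/
def argSet (a : Fin (J + 1) → ℝ) (j : Fin (J + 1)) : Set (Fin (J + 1) → ℝ) :=
  {x | ∀ k, k ≠ j → a k + x k < a j + x j}

lemma isOpen_argSet (a : Fin (J + 1) → ℝ) (j : Fin (J + 1)) : IsOpen (argSet a j) := by
  have : argSet a j = ⋂ k, {x : Fin (J+1) → ℝ | k ≠ j → a k + x k < a j + x j} := by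
    ext x; simp [argSet, Set.mem_iInter]
  rw [this]
  refine isOpen_iInter_of_finite fun k => ?_
  by_cases hk : k = j
  · simp [hk]
  · have : {x : Fin (J+1) → ℝ | k ≠ j → a k + x k < a j + x j}
        = {x : Fin (J+1) → ℝ | a k + x k < a j + x j} := by
      ext x; simp [hk]
    rw [this]
    exact isOpen_lt ((continuous_const.add (continuous_apply k)))
      ((continuous_const.add (continuous_apply j)))

lemma mem_argSet_comm {a c : Fin (J + 1) → ℝ} {j : Fin (J + 1)} :
    c ∈ argSet a j ↔ a ∈ argSet c j := by
  constructor <;> intro h k hk <;> have := h k hk <;> linarith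

lemma argSet_nonempty (a : Fin (J + 1) → ℝ) (j : Fin (J + 1)) : (argSet a j).Nonempty := by
  set M : ℝ := ((univ : Finset (Fin (J+1))).sup' ⟨0, mem_univ 0⟩ a) - a j + 1 with hM
  refine ⟨M • (Pi.single j 1 : Fin (J+1) → ℝ), fun k hk => ?_⟩
  have hk1 : (M • (Pi.single j 1 : Fin (J+1) → ℝ)) k = 0 := by
    simp [Pi.single_eq_of_ne hk]
  have hj1 : (M • (Pi.single j 1 : Fin (J+1) → ℝ)) j = M := by simp
  rw [hk1, hj1]
  have : a k ≤ (univ : Finset (Fin (J+1))).sup' ⟨0, mem_univ 0⟩ a :=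
    Finset.le_sup' a (mem_univ k)
  rw [hM]; linarith

lemma disjoint_argSet (a : Fin (J + 1) → ℝ) {j k : Fin (J + 1)} (hjk : j ≠ k)
    {x : Fin (J + 1) → ℝ} (hj : x ∈ argSet a j) (hk : x ∈ argSet a k) : False := by
  have h1 := hj k (Ne.symm hjk)
  have h2 := hk j hjk
  linarith

lemma msup_eq_of_mem_argSet {a c : Fin (J + 1) → ℝ} {j : Fin (J + 1)}
    (h : a ∈ argSet c j) : msup a c = a j + c j := by
  refine le_antisymm (msup_le fun k => ?_) (le_msup a c j)
  by_cases hk : k = j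
  · subst hk; exact le_rfl
  · have := h k hk; linarith

lemma null_hyperplane {j k : Fin (J + 1)} (hjk : j ≠ k) (c : ℝ) :
    volume {x : Fin (J + 1) → ℝ | x j - x k = c} = 0 := by
  set L : (Fin (J+1) → ℝ) →ₗ[ℝ] ℝ :=
    (LinearMap.proj j : ((Fin (J+1) → ℝ) →ₗ[ℝ] ℝ)) - LinearMap.proj k with hL
  have hK : LinearMap.ker L ≠ ⊤ := by
    intro h
    have h1 : (Pi.single j 1 : Fin (J+1) → ℝ) ∈ LinearMap.ker L := h ▸ Submodule.mem_top
    rw [LinearMap.mem_ker, hL] at h1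
    simp [Pi.single_eq_of_ne (Ne.symm hjk)] at h1
  set v : Fin (J+1) → ℝ := c • (Pi.single j 1 : Fin (J+1) → ℝ) with hv
  have hset : {x : Fin (J + 1) → ℝ | x j - x k = c}
      = (fun x => x + (-v)) ⁻¹' (LinearMap.ker L : Set (Fin (J+1) → ℝ)) := by
    ext x
    simp only [Set.mem_setOf_eq, Set.mem_preimage, SetLike.mem_coe, LinearMap.mem_ker, hL, hv,
      LinearMap.sub_apply, LinearMap.proj_apply, Pi.add_apply, Pi.neg_apply, Pi.smul_apply,
      smul_eq_mul]
    rw [Pi.single_eq_same, Pi.single_eq_of_ne (Ne.symm hjk)]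
    constructor <;> intro h <;> [skip; skip] <;> · simp only [funext_iff] at *; linarith
  rw [hset, measure_preimage_add_right]
  exact Measure.addHaar_submodule volume _ hK

lemma null_ties {Ωs : Type*} [MeasurableSpace Ωs] {μ : Measure Ωs}
    {ε : Ωs → (Fin (J + 1) → ℝ)}
    (hac : (Measure.map ε μ) ≪ (volume : Measure (Fin (J + 1) → ℝ)))
    (a : Fin (J + 1) → ℝ) :
    (Measure.map ε μ) ((⋃ j, argSet a j)ᶜ) = 0 := by
  apply hac
  have hsub : (⋃ j, argSet a j)ᶜ ⊆
      ⋃ (j : Fin (J+1)), ⋃ (k : Fin (J+1)),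
        {x : Fin (J+1) → ℝ | j ≠ k ∧ x j - x k = a k - a j} := by
    intro x hx
    simp only [Set.mem_compl_iff, Set.mem_iUnion] at hx ⊢
    obtain ⟨j, _, hj⟩ := Finset.exists_max_image (univ : Finset (Fin (J+1)))
      (fun i => a i + x i) ⟨0, mem_univ 0⟩
    have hnot : x ∉ argSet a j := fun h => hx ⟨j, h⟩
    rw [argSet, Set.mem_setOf_eq] at hnot
    push_neg at hnot
    obtain ⟨k, hk, hle⟩ := hnot
    exact ⟨k, j, hk, by have := hj k (mem_univ k); linarith⟩
  refine measure_mono_null hsub ?_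
  refine measure_iUnion_null fun j => measure_iUnion_null fun k => ?_
  by_cases hjk : j = k
  · have : {x : Fin (J+1) → ℝ | j ≠ k ∧ x j - x k = a k - a j} = ∅ := by
      ext x; simp [hjk]
    simp [this]
  · refine measure_mono_null (fun x hx => hx.2) (null_hyperplane hjk _)

noncomputable def Dmap (a x : Fin (J + 1) → ℝ) : (Fin (J + 1) → ℝ) →L[ℝ] ℝ :=
  ∑ j, (argSet a j).indicator (fun _ => (1:ℝ)) x •
    (ContinuousLinearMap.proj (R := ℝ) (φ := fun _ : Fin (J+1) => ℝ) j)

lemma Dmap_eq_proj {a x : Fin (J + 1) → ℝ} {j : Fin (J + 1)} (hx : x ∈ argSet a j) :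
    Dmap a x = ContinuousLinearMap.proj (R := ℝ) (φ := fun _ : Fin (J+1) => ℝ) j := by
  rw [Dmap, Finset.sum_eq_single j]
  · rw [Set.indicator_of_mem hx, one_smul]
  · intro k _ hkj
    rw [Set.indicator_of_notMem (fun hk => disjoint_argSet a hkj hk hx), zero_smul]
  · exact fun h => absurd (mem_univ j) h

lemma Dmap_apply_single (a x : Fin (J + 1) → ℝ) (j : Fin (J + 1)) :
    (Dmap a x) (Pi.single j 1) = (argSet a j).indicator (fun _ => (1:ℝ)) x := by
  rw [Dmap, ContinuousLinearMap.sum_apply, Finset.sum_eq_single j]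
  · simp
  · intro k _ hkj
    have hz : (Pi.single j (1:ℝ) : Fin (J+1) → ℝ) k = 0 := Pi.single_eq_of_ne hkj 1
    simp [hz]
  · exact fun h => absurd (mem_univ j) h

lemma aesm_Dmap {Ωs : Type*} [MeasurableSpace Ωs] {μ : Measure Ωs}
    {ε : Ωs → (Fin (J + 1) → ℝ)} (hmeas : Measurable ε) (a : Fin (J + 1) → ℝ) :
    AEStronglyMeasurable (fun ω => Dmap a (ε ω)) μ := by
  refine (StronglyMeasurable.aestronglyMeasurable ?_)
  unfold Dmap
  refine Finset.stronglyMeasurable_fun_sum _ fun j _ => StronglyMeasurable.smul_const ?_ _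
  exact ((measurable_const.indicator (isOpen_argSet a j).measurableSet).comp hmeas).stronglyMeasurable

lemma full_argmax {Ωs : Type*} [MeasurableSpace Ωs] {μ : Measure Ωs}
    {ε : Ωs → (Fin (J + 1) → ℝ)} (hmeas : Measurable ε)
    (hac : (Measure.map ε μ) ≪ (volume : Measure (Fin (J + 1) → ℝ)))
    (a : Fin (J + 1) → ℝ) :
    ∀ᵐ ω ∂μ, ∃ j, ε ω ∈ argSet a j := by
  have h0 : (Measure.map ε μ) ((⋃ j, argSet a j)ᶜ) = 0 := null_ties hac a
  rw [Measure.map_apply hmeas (MeasurableSet.compl (MeasurableSet.iUnion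
    fun j => (isOpen_argSet a j).measurableSet))] at h0
  rw [Filter.eventually_iff, mem_ae_iff]
  convert h0 using 2
  ext ω
  simp [argSet]

lemma key_hasFDerivAt {Ωs : Type*} [MeasurableSpace Ωs] {μ : Measure Ωs}
    [IsProbabilityMeasure μ] {ε : Ωs → (Fin (J + 1) → ℝ)} (hmeas : Measurable ε)
    (hac : (Measure.map ε μ) ≪ (volume : Measure (Fin (J + 1) → ℝ)))
    (hint : ∀ j, Integrable (fun ω => ε ω j) μ) (a : Fin (J + 1) → ℝ) :
    Integrable (fun ω => Dmap a (ε ω)) μ ∧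
      HasFDerivAt (fun x => ∫ ω, msup x (ε ω) ∂μ) (∫ ω, Dmap a (ε ω) ∂μ) a := by
  refine hasFDerivAt_integral_of_dominated_loc_of_lip (bound := fun _ => (1:ℝ))
    Filter.univ_mem (Filter.Eventually.of_forall fun x =>
      (((measurable_msup x).comp hmeas).aestronglyMeasurable))
    (integrable_msup hmeas hint a) (aesm_Dmap hmeas a) ?_ (integrable_const 1) ?_
  · refine Filter.Eventually.of_forall fun ω => ?_
    have h1 : Real.nnabs (1:ℝ) = 1 := by simp
    rw [h1]
    exact LipschitzOnWith.mono ((msup_lipschitz (ε ω)).lipschitzOnWith) (Set.subset_univ _)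
  · refine (full_argmax hmeas hac a).mono fun ω hω => ?_
    obtain ⟨j, hj⟩ := hω
    rw [Dmap_eq_proj hj]
    have haV : a ∈ argSet (ε ω) j := mem_argSet_comm.mp hj
    have heq : (fun x => msup x (ε ω)) =ᶠ[nhds a] (fun x => x j + ε ω j) :=
      Filter.eventuallyEq_of_mem ((isOpen_argSet (ε ω) j).mem_nhds haV)
        (fun x hx => msup_eq_of_mem_argSet hx)
    refine HasFDerivAt.congr_of_eventuallyEq ?_ heq
    exact (ContinuousLinearMap.proj (R := ℝ) (φ := fun _ : Fin (J+1) => ℝ) j).hasFDerivAt.add_const _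

lemma integral_Dmap_single {Ωs : Type*} [MeasurableSpace Ωs] {μ : Measure Ωs}
    [IsProbabilityMeasure μ] {ε : Ωs → (Fin (J + 1) → ℝ)} (hmeas : Measurable ε)
    (hac : (Measure.map ε μ) ≪ (volume : Measure (Fin (J + 1) → ℝ)))
    (hint : ∀ j, Integrable (fun ω => ε ω j) μ) (a : Fin (J + 1) → ℝ) (j : Fin (J + 1)) :
    (∫ ω, Dmap a (ε ω) ∂μ) (Pi.single j 1)
      = ((Measure.map ε μ) (argSet a j)).toReal := by
  rw [ContinuousLinearMap.integral_apply (key_hasFDerivAt hmeas hac hint a).1]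
  simp_rw [Dmap_apply_single]
  have hswap : (fun ω => (argSet a j).indicator (fun _ => (1:ℝ)) (ε ω))
      = (ε ⁻¹' (argSet a j)).indicator (fun _ => (1:ℝ)) := by
    funext ω
    by_cases h : ε ω ∈ argSet a j
    · simp [Set.indicator, h]
    · simp [Set.indicator, h]
  rw [hswap, integral_indicator_const (1:ℝ) (hmeas (isOpen_argSet a j).measurableSet),
    Measure.map_apply hmeas (isOpen_argSet a j).measurableSet, smul_eq_mul, mul_one]
  rfl

lemma P_pos {Ωs : Type*} [MeasurableSpace Ωs] {μ : Measure Ωs}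
    [IsProbabilityMeasure μ] {ε : Ωs → (Fin (J + 1) → ℝ)} (hmeas : Measurable ε)
    (hfull : ∀ s : Set (Fin (J + 1) → ℝ), IsOpen s → s.Nonempty →
      0 < Measure.map ε μ s) (a : Fin (J + 1) → ℝ) (j : Fin (J + 1)) :
    0 < ((Measure.map ε μ) (argSet a j)).toReal := by
  have hprob : IsProbabilityMeasure (Measure.map ε μ) :=
    Measure.isProbabilityMeasure_map hmeas.aemeasurable
  exact ENNReal.toReal_pos (hfull _ (isOpen_argSet a j) (argSet_nonempty a j)).ne'
    (measure_ne_top _ _)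

lemma P_sum_one {Ωs : Type*} [MeasurableSpace Ωs] {μ : Measure Ωs}
    [IsProbabilityMeasure μ] {ε : Ωs → (Fin (J + 1) → ℝ)} (hmeas : Measurable ε)
    (hac : (Measure.map ε μ) ≪ (volume : Measure (Fin (J + 1) → ℝ)))
    (a : Fin (J + 1) → ℝ) :
    ∑ j, ((Measure.map ε μ) (argSet a j)).toReal = 1 := by
  have hprob : IsProbabilityMeasure (Measure.map ε μ) :=
    Measure.isProbabilityMeasure_map hmeas.aemeasurable
  set ν := Measure.map ε μ with hν
  have hdisj : (↑(univ : Finset (Fin (J+1))) : Set (Fin (J+1))).Pairwise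
      (Function.onFun Disjoint fun j => argSet a j) := by
    intro j _ k _ hjk
    exact Set.disjoint_left.mpr fun x hj hk => absurd (disjoint_argSet a hjk hj hk) not_false
  have hU : ∑ j, ν (argSet a j) = ν (⋃ j ∈ (univ : Finset (Fin (J+1))), argSet a j) :=
    (measure_biUnion_finset hdisj fun j _ => (isOpen_argSet a j).measurableSet).symm
  have hUU : (⋃ j ∈ (univ : Finset (Fin (J+1))), argSet a j) = ⋃ j, argSet a j := by
    simp
  have hone : ν (⋃ j, argSet a j) = 1 := by
    have hc : ν ((⋃ j, argSet a j)ᶜ) = 0 := null_ties hac a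
    have h1 : (1:ℝ≥0∞) = ν Set.univ := (measure_univ).symm
    have hsplit : ν Set.univ ≤ ν (⋃ j, argSet a j) + ν ((⋃ j, argSet a j)ᶜ) := by
      rw [← Set.union_compl_self (⋃ j, argSet a j)] at h1
      calc ν Set.univ = ν ((⋃ j, argSet a j) ∪ (⋃ j, argSet a j)ᶜ) := by
            rw [Set.union_compl_self]
        _ ≤ _ := measure_union_le _ _
    rw [hc, add_zero] at hsplit
    exact le_antisymm prob_le_one (h1 ▸ hsplit)
  have : ∑ j, ν (argSet a j) = 1 := by rw [hU, hUU, hone]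
  calc ∑ j, (ν (argSet a j)).toReal = (∑ j, ν (argSet a j)).toReal :=
        (ENNReal.toReal_sum fun j _ => measure_ne_top _ _).symm
    _ = 1 := by rw [this]; simp

lemma msup_line_convex (c a d : Fin (J+1) → ℝ) :
    ConvexOn ℝ Set.univ (fun t : ℝ => msup (a + t • d) c) := by
  refine ⟨convex_univ, fun x _ y _ p q hp hq hpq => ?_⟩
  refine msup_le fun i => ?_
  have h1 : (a + x • d) i + c i ≤ msup (a + x • d) c := le_msup _ _ i
  have h2 : (a + y • d) i + c i ≤ msup (a + y • d) c := le_msup _ _ i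
  simp only [Pi.add_apply, Pi.smul_apply, smul_eq_mul] at h1 h2 ⊢
  have hq1 : q = 1 - p := by linarith
  subst hq1
  have hp1 : (0:ℝ) ≤ 1 - p := by linarith
  nlinarith [mul_le_mul_of_nonneg_left h1 hp, mul_le_mul_of_nonneg_left h2 hp1]

lemma msup_midpoint_le (c a d : Fin (J+1) → ℝ) :
    msup (a + (1/2 : ℝ) • d) c ≤ (msup a c + msup (a + d) c) / 2 := by
  refine msup_le fun i => ?_
  have h1 : a i + c i ≤ msup a c := le_msup _ _ i
  have h2 : (a + d) i + c i ≤ msup (a + d) c := le_msup _ _ i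
  simp only [Pi.add_apply, Pi.smul_apply, smul_eq_mul] at h1 h2 ⊢
  linarith

lemma msup_midpoint_lt {c a d : Fin (J+1) → ℝ} {j k : Fin (J+1)} (hjk : j ≠ k)
    (hj : c ∈ argSet a j) (hk : c ∈ argSet (a + d) k) :
    msup (a + (1/2 : ℝ) • d) c < (msup a c + msup (a + d) c) / 2 := by
  obtain ⟨i, hi⟩ := exists_msup_eq (a + (1/2 : ℝ) • d) c
  have h1 : a i + c i ≤ msup a c := le_msup _ _ i
  have h2 : (a + d) i + c i ≤ msup (a + d) c := le_msup _ _ i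
  have hstrict : a i + c i < msup a c ∨ (a + d) i + c i < msup (a + d) c := by
    by_cases hij : i = j
    · subst hij
      have hik : i ≠ k := hjk
      right
      have := hk i hik
      have hkk : msup (a + d) c = (a + d) k + c k := msup_eq_of_mem_argSet (mem_argSet_comm.mp hk)
      rw [hkk]; exact this
    · left
      have := hj i hij
      have hjj : msup a c = a j + c j := msup_eq_of_mem_argSet (mem_argSet_comm.mp hj)
      rw [hjj]; exact this
  rw [hi]
  simp only [Pi.add_apply, Pi.smul_apply, smul_eq_mul] at h1 h2 hstrict ⊢
  rcases hstrict with h | h <;> linarith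

lemma exists_sep {a d : Fin (J+1) → ℝ} {j k : Fin (J+1)}
    (hmin : ∀ i, d j ≤ d i) (hmax : ∀ i, d i ≤ d k) (hlt : d j < d k) :
    (argSet a j ∩ argSet (a + d) k).Nonempty := by
  classical
  have hjk : j ≠ k := fun h => absurd (h ▸ hlt) (lt_irrefl _)
  set Md : ℝ := (univ : Finset (Fin (J+1))).sup' ⟨0, mem_univ 0⟩ (fun i => |d i|) with hMd
  have hMd_le : ∀ i, |d i| ≤ Md := fun i => Finset.le_sup' (fun i => |d i|) (mem_univ i)
  have h0Md : 0 ≤ Md := (abs_nonneg (d 0)).trans (hMd_le 0)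
  set C : ℝ := 1 + 2 * Md with hC
  set b : Fin (J+1) → ℝ := fun i => if i = j then 0 else if i = k then -(d k - d j)/2 else -C
    with hb
  have hbj : b j = 0 := by simp [hb]
  have hbk : b k = -(d k - d j)/2 := by simp [hb, Ne.symm hjk]
  refine ⟨fun i => b i - a i, fun i hij => ?_, fun i hik => ?_⟩
  · have e1 : a i + (b i - a i) = b i := by ring
    have e2 : a j + (b j - a j) = b j := by ring
    rw [e1, e2, hbj]
    by_cases hik : i = k
    · subst hik; rw [hbk]; linarith
    · have : b i = -C := by simp [hb, hij, hik]
      rw [this, hC]; linarith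
  · have e1 : (a + d) i + (b i - a i) = b i + d i := by simp only [Pi.add_apply]; ring
    have e2 : (a + d) k + (b k - a k) = b k + d k := by simp only [Pi.add_apply]; ring
    rw [e1, e2, hbk]
    by_cases hij : i = j
    · subst hij; rw [hbj]; linarith
    · have : b i = -C := by simp [hb, hij, hik]
      rw [this, hC]
      have h1 : d i ≤ Md := (le_abs_self _).trans (hMd_le i)
      have h2' : -Md ≤ d j := by have := hMd_le j; have := neg_abs_le (d j); linarith
      have h3 : -Md ≤ d k := by have := hMd_le k; have := neg_abs_le (d k); linarith
      linarith

lemma phi_convex {Ωs : Type*} [MeasurableSpace Ωs] {μ : Measure Ωs}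
    [IsProbabilityMeasure μ] {ε : Ωs → (Fin (J + 1) → ℝ)} (hmeas : Measurable ε)
    (hint : ∀ j, Integrable (fun ω => ε ω j) μ) (a d : Fin (J + 1) → ℝ) :
    ConvexOn ℝ Set.univ (fun t : ℝ => ∫ ω, msup (a + t • d) (ε ω) ∂μ) := by
  refine ⟨convex_univ, fun x _ y _ p q hp hq hpq => ?_⟩
  simp only [smul_eq_mul]
  have hpt : ∀ ω, msup (a + (p * x + q * y) • d) (ε ω)
      ≤ p * msup (a + x • d) (ε ω) + q * msup (a + y • d) (ε ω) := by
    intro ω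
    have := (msup_line_convex (ε ω) a d).2 (Set.mem_univ x) (Set.mem_univ y) hp hq hpq
    simpa [smul_eq_mul] using this
  calc ∫ ω, msup (a + (p * x + q * y) • d) (ε ω) ∂μ
      ≤ ∫ ω, (p * msup (a + x • d) (ε ω) + q * msup (a + y • d) (ε ω)) ∂μ := by
        refine integral_mono (integrable_msup hmeas hint _)
          (((integrable_msup hmeas hint _).const_mul p).add
            ((integrable_msup hmeas hint _).const_mul q)) hpt
    _ = p * ∫ ω, msup (a + x • d) (ε ω) ∂μ + q * ∫ ω, msup (a + y • d) (ε ω) ∂μ := by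
        rw [integral_add ((integrable_msup hmeas hint _).const_mul p)
          ((integrable_msup hmeas hint _).const_mul q), integral_const_mul, integral_const_mul]

lemma phi_hasDerivAt {Ωs : Type*} [MeasurableSpace Ωs] {μ : Measure Ωs}
    [IsProbabilityMeasure μ] {ε : Ωs → (Fin (J + 1) → ℝ)} (hmeas : Measurable ε)
    (hac : (Measure.map ε μ) ≪ (volume : Measure (Fin (J + 1) → ℝ)))
    (hint : ∀ j, Integrable (fun ω => ε ω j) μ) (a d : Fin (J + 1) → ℝ) (t : ℝ) :
    HasDerivAt (fun t : ℝ => ∫ ω, msup (a + t • d) (ε ω) ∂μ)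
      ((∫ ω, Dmap (a + t • d) (ε ω) ∂μ) d) t := by
  have hA : HasDerivAt (fun t : ℝ => a + t • d) d t := by
    simpa using ((hasDerivAt_id t).smul_const d).const_add a
  exact (key_hasFDerivAt hmeas hac hint (a + t • d)).2.comp_hasDerivAt t hA

lemma clm_apply_eq_sum (L : (Fin (J+1) → ℝ) →L[ℝ] ℝ) (d : Fin (J+1) → ℝ) :
    L d = ∑ j, d j * L (Pi.single j 1) := by
  have hd : d = ∑ j, d j • (Pi.single j 1 : Fin (J+1) → ℝ) := by
    funext i
    rw [Finset.sum_apply, Finset.sum_eq_single i]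
    · simp
    · intro k _ hki
      have : (Pi.single k (1:ℝ) : Fin (J+1) → ℝ) i = 0 := Pi.single_eq_of_ne (Ne.symm hki) 1
      simp [this]
    · exact fun h => absurd (mem_univ i) h
  conv_lhs => rw [hd]
  rw [map_sum]
  exact Finset.sum_congr rfl fun j _ => by rw [_root_.map_smul, smul_eq_mul]


/-- Injectivity of the ARUM choice-probability map: with full-support errors,
the gradient of the surplus function, restricted to {a : a₀ = 0}, is injective
into the interior of the unit simplex. -/
theorem stmt_11 {Ωs : Type*} [MeasurableSpace Ωs] (μ : Measure Ωs)
    [IsProbabilityMeasure μ] {J : ℕ}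
    (ε : Ωs → (Fin (J + 1) → ℝ)) (hmeas : Measurable ε)
    (hac : (Measure.map ε μ) ≪ (volume : Measure (Fin (J + 1) → ℝ)))
    (hfull : ∀ s : Set (Fin (J + 1) → ℝ), IsOpen s → s.Nonempty →
      0 < Measure.map ε μ s)
    (hint : ∀ j, Integrable (fun ω => ε ω j) μ)
    (G : (Fin (J + 1) → ℝ) → ℝ)
    (hG : ∀ a, G a = ∫ ω, (⨆ j, (a j + ε ω j)) ∂μ) :
    (∀ a j, 0 < fderiv ℝ G a (Pi.single j 1)) ∧
    (∀ a, ∑ j, fderiv ℝ G a (Pi.single j 1) = 1) ∧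
    (∀ a₁ a₂ : Fin (J + 1) → ℝ, a₁ 0 = 0 → a₂ 0 = 0 →
      (∀ j, fderiv ℝ G a₁ (Pi.single j 1) = fderiv ℝ G a₂ (Pi.single j 1)) →
      a₁ = a₂) := by
  have hGfun : G = fun x => ∫ ω, msup x (ε ω) ∂μ := funext fun a => hG a
  have hfd : ∀ a : Fin (J+1) → ℝ, fderiv ℝ G a = ∫ ω, Dmap a (ε ω) ∂μ := by
    intro a
    rw [hGfun]
    exact ((key_hasFDerivAt hmeas hac hint a).2).fderiv
  refine ⟨?_, ?_, ?_⟩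
  · intro a j
    rw [hfd a, integral_Dmap_single hmeas hac hint a j]
    exact P_pos hmeas hfull a j
  · intro a
    have h : ∀ j, fderiv ℝ G a (Pi.single j 1)
        = ((Measure.map ε μ) (argSet a j)).toReal := fun j => by
      rw [hfd a, integral_Dmap_single hmeas hac hint a j]
    simp_rw [h]
    exact P_sum_one hmeas hac a
  · intro a₁ a₂ h10 h20 hder
    by_contra hne
    set d : Fin (J+1) → ℝ := fun i => a₁ i - a₂ i with hd
    have hd0 : d 0 = 0 := by rw [hd]; simp [h10, h20]
    have ha1 : a₂ + d = a₁ := by funext i; simp [hd]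
    obtain ⟨j, _, hjmin⟩ := Finset.exists_min_image univ d ⟨0, mem_univ 0⟩
    obtain ⟨k, _, hkmax⟩ := Finset.exists_max_image univ d ⟨0, mem_univ 0⟩
    have hlt : d j < d k := by
      rcases lt_or_ge (d j) (d k) with h | h
      · exact h
      · exfalso
        apply hne
        funext i
        have h1 := hjmin i (mem_univ i)
        have h2 := hkmax i (mem_univ i)
        have h3 := hjmin 0 (mem_univ 0)
        have h4 := hkmax 0 (mem_univ 0)
        have : d i = 0 := by linarith
        rw [hd] at this
        simp only at this
        linarith
    have hjk : j ≠ k := fun h => absurd (h ▸ hlt) (lt_irrefl _)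
    set φ : ℝ → ℝ := fun t => ∫ ω, msup (a₂ + t • d) (ε ω) ∂μ with hφ
    have hconv := phi_convex hmeas hint a₂ d
    have ha20 : a₂ + (0:ℝ) • d = a₂ := by simp
    have ha21 : a₂ + (1:ℝ) • d = a₁ := by rw [one_smul, ha1]
    set c : ℝ := (∫ ω, Dmap a₂ (ε ω) ∂μ) d with hc
    have hceq : (∫ ω, Dmap a₁ (ε ω) ∂μ) d = c := by
      rw [hc, clm_apply_eq_sum, clm_apply_eq_sum]
      refine Finset.sum_congr rfl fun i _ => ?_
      have h := hder i
      rw [hfd a₁, hfd a₂] at h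
      rw [h]
    have hD0 : HasDerivAt φ c 0 := by
      have h := phi_hasDerivAt hmeas hac hint a₂ d 0
      rwa [ha20] at h
    have hD1 : HasDerivAt φ c 1 := by
      have h := phi_hasDerivAt hmeas hac hint a₂ d 1
      rwa [ha21, hceq] at h
    have hs1 : c ≤ slope φ 0 (1/2) :=
      hconv.le_slope_of_hasDerivAt (Set.mem_univ _) (Set.mem_univ _) (by norm_num) hD0
    have hs2 : slope φ (1/2) 1 ≤ c :=
      hconv.slope_le_of_hasDerivAt (Set.mem_univ _) (Set.mem_univ _) (by norm_num) hD1
    have hs1' : c / 2 ≤ φ (1/2) - φ 0 := by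
      rw [show slope φ 0 (1/2) = 2 * (φ (1/2) - φ 0) by rw [slope_def_field]; ring] at hs1
      linarith
    have hs2' : φ 1 - φ (1/2) ≤ c / 2 := by
      rw [show slope φ (1/2) 1 = 2 * (φ 1 - φ (1/2)) by rw [slope_def_field]; ring] at hs2
      linarith
    have hmid_le : φ (1/2) ≤ (φ 0 + φ 1)/2 := by
      have h := hconv.2 (Set.mem_univ (0:ℝ)) (Set.mem_univ (1:ℝ))
        (by norm_num : (0:ℝ) ≤ 1/2) (by norm_num : (0:ℝ) ≤ 1/2) (by norm_num)
      simp only [smul_eq_mul, mul_zero, mul_one, zero_add] at h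
      linarith
    have hmid_eq : φ (1/2) = (φ 0 + φ 1)/2 := by linarith
    -- strict convexity on a positive measure set
    have hS : (argSet a₂ j ∩ argSet (a₂ + d) k).Nonempty :=
      exists_sep (fun i => hjmin i (mem_univ i)) (fun i => hkmax i (mem_univ i)) hlt
    set u : Ωs → ℝ := fun ω =>
      (msup a₂ (ε ω) + msup (a₂ + d) (ε ω))/2 - msup (a₂ + (1/2:ℝ) • d) (ε ω) with hu
    have hu_nonneg : ∀ ω, 0 ≤ u ω := fun ω => by
      have h := msup_midpoint_le (ε ω) a₂ d
      rw [hu]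
      simp only
      linarith
    have hu_int : Integrable u μ :=
      (((integrable_msup hmeas hint a₂).add (integrable_msup hmeas hint (a₂ + d))).div_const
        2).sub (integrable_msup hmeas hint _)
    have hu_integral : ∫ ω, u ω ∂μ = 0 := by
      have hA : Integrable (fun ω => (msup a₂ (ε ω) + msup (a₂ + d) (ε ω))/2) μ :=
        ((integrable_msup hmeas hint a₂).add (integrable_msup hmeas hint (a₂ + d))).div_const 2
      have hA1 : Integrable (fun ω => msup a₂ (ε ω) + msup (a₂ + d) (ε ω)) μ :=
        (integrable_msup hmeas hint a₂).add (integrable_msup hmeas hint (a₂ + d))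
      rw [hu]
      rw [integral_sub hA (integrable_msup hmeas hint _), integral_div,
        integral_add (integrable_msup hmeas hint a₂) (integrable_msup hmeas hint (a₂ + d))]
      have e0 : ∫ ω, msup a₂ (ε ω) ∂μ = φ 0 := by rw [hφ]; simp only; rw [ha20]
      have e1 : ∫ ω, msup (a₂ + d) (ε ω) ∂μ = φ 1 := by
        rw [hφ]; simp only; rw [ha21, ha1]
      have e2 : ∫ ω, msup (a₂ + (1/2:ℝ) • d) (ε ω) ∂μ = φ (1/2) := by rw [hφ]
      rw [e0, e1, e2, hmid_eq]
      ring
    have hu0 : ∀ᵐ ω ∂μ, u ω = 0 := by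
      have h := (integral_eq_zero_iff_of_nonneg (fun ω => hu_nonneg ω) hu_int).mp hu_integral
      filter_upwards [h] with ω hω using hω
    have hsub : ε ⁻¹' (argSet a₂ j ∩ argSet (a₂ + d) k) ⊆ {ω | ¬ u ω = 0} := by
      intro ω hω
      have hlt2 : msup (a₂ + (1/2:ℝ) • d) (ε ω)
          < (msup a₂ (ε ω) + msup (a₂ + d) (ε ω)) / 2 :=
        msup_midpoint_lt hjk hω.1 hω.2
      have : 0 < u ω := by rw [hu]; simp only; linarith
      exact fun h0 => absurd (h0 ▸ this) (lt_irrefl _)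
    have hnull : μ {ω | ¬ u ω = 0} = 0 := by
      rw [ae_iff] at hu0
      exact hu0
    have hzero : μ (ε ⁻¹' (argSet a₂ j ∩ argSet (a₂ + d) k)) = 0 :=
      measure_mono_null hsub hnull
    have hposS : 0 < (Measure.map ε μ) (argSet a₂ j ∩ argSet (a₂ + d) k) :=
      hfull _ ((isOpen_argSet _ _).inter (isOpen_argSet _ _)) hS
    rw [Measure.map_apply hmeas (((isOpen_argSet _ _).inter
      (isOpen_argSet _ _)).measurableSet)] at hposS
    rw [hzero] at hposS
    exact absurd hposS (lt_irrefl _)
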